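/- Let p be a prime, f_1, ..., f_r ∈ ℤ[x_1, ..., x_n], and α_1, ..., α_r positive integers with Σ_{j=1}^r (p^{α_j} - 1)·deg(f_j) < n. If there exists a ∈ {0,1}^n with f_j(a) ≡ 0 (mod p^{α_j}) for all j, then there exist at least two distinct such points in {0,1}^n. -/

import Mathlib

open Finset MvPolynomial

/-- Periodicity of `choose · (p^α - 1)` mod `p` with period `p^α`. -/
private lemma brink_choose_period (p : ℕ) (hp : p.Prime) (α : ℕ) (A Q : ℕ) :
    ((A + Q * p ^ α).choose (p ^ α - 1) : ZMod p) = (A.choose (p ^ α - 1) : ZMod p) := by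
  induction Q with
  | zero => simp
  | succ q ih =>
    have h1 : A + (q + 1) * p ^ α = (A + q * p ^ α) + p ^ α := by ring
    rw [h1, Nat.add_choose_eq, Nat.cast_sum]
    rw [Finset.sum_eq_single ((p ^ α - 1, 0) : ℕ × ℕ)]
    · rw [Nat.choose_zero_right, mul_one]
      exact ih
    · rintro ⟨u, v⟩ hmem hne
      rw [Finset.HasAntidiagonal.mem_antidiagonal] at hmem
      have hppos : 1 ≤ p ^ α := Nat.one_le_pow _ _ hp.pos
      have hv : v ≠ 0 := by
        rintro rfl
        exact hne (by rw [Prod.mk.injEq]; omega)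
      have hvne : v ≠ p ^ α := by omega
      have hdvd : p ∣ (p ^ α).choose v := Nat.Prime.dvd_choose_pow hp hv hvne
      rw [Nat.cast_mul, (ZMod.natCast_eq_zero_iff _ _).mpr hdvd, mul_zero]
    · intro habs
      exact absurd (Finset.HasAntidiagonal.mem_antidiagonal.mpr (by omega)) habs

/-- Value of `choose (N-1) (p^α - 1)` mod `p`: it is `1` if `p^α ∣ N`, else `0`. -/
private lemma brink_choose_val (p : ℕ) (hp : p.Prime) (α : ℕ) (hα : 0 < α) (N : ℕ)
    (hN : 0 < N) :
    ((N - 1).choose (p ^ α - 1) : ZMod p) = if p ^ α ∣ N then 1 else 0 := by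
  have hP2 : 2 ≤ p ^ α := by
    calc 2 ≤ p := hp.two_le
    _ = p ^ 1 := (pow_one p).symm
    _ ≤ p ^ α := Nat.pow_le_pow_right hp.pos hα
  by_cases hdvd : p ^ α ∣ N
  · obtain ⟨Q, rfl⟩ := hdvd
    have hQ : 1 ≤ Q := by
      rcases Nat.eq_zero_or_pos Q with h | h
      · subst h; simp at hN
      · exact h
    obtain ⟨Q', rfl⟩ : ∃ Q', Q = Q' + 1 := ⟨Q - 1, by omega⟩
    have h2 : p ^ α * (Q' + 1) = Q' * p ^ α + p ^ α := by ring
    have h3 : p ^ α * (Q' + 1) - 1 = (p ^ α - 1) + Q' * p ^ α := by omega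
    rw [h3, brink_choose_period p hp, Nat.choose_self, if_pos ⟨Q' + 1, rfl⟩, Nat.cast_one]
  · have hdm := Nat.div_add_mod N (p ^ α)
    have hcomm : p ^ α * (N / p ^ α) = (N / p ^ α) * p ^ α := mul_comm _ _
    have hs : N % p ^ α ≠ 0 := fun h => hdvd (Nat.dvd_of_mod_eq_zero h)
    have hslt : N % p ^ α < p ^ α := Nat.mod_lt _ (by omega)
    have h1 : N - 1 = (N % p ^ α - 1) + (N / p ^ α) * p ^ α := by omega
    rw [h1, brink_choose_period p hp, Nat.choose_eq_zero_of_lt (by omega), if_neg hdvd,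
      Nat.cast_zero]

/-- The alternating sum over the cube `{0,1}ⁿ` of a polynomial of total degree `< n`
vanishes. -/
private lemma brink_alt_sum {n : ℕ} (P : MvPolynomial (Fin n) ℚ) (h : P.totalDegree < n) :
    ∑ x : Fin n → Bool, (∏ i, if x i then (-1 : ℚ) else 1) *
      MvPolynomial.eval (fun i => if x i then (1 : ℚ) else 0) P = 0 := by
  have key : ∀ x : Fin n → Bool,
      (∏ i, if x i then (-1 : ℚ) else 1) *
        MvPolynomial.eval (fun i => if x i then (1 : ℚ) else 0) P
      = ∑ d ∈ P.support, P.coeff d *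
          ∏ i, ((if x i then (-1 : ℚ) else 1) * (if x i then (1 : ℚ) else 0) ^ d i) := by
    intro x
    rw [MvPolynomial.eval_eq', Finset.mul_sum]
    refine Finset.sum_congr rfl fun d _ => ?_
    rw [Finset.prod_mul_distrib]
    ring
  simp only [key]
  rw [Finset.sum_comm]
  refine Finset.sum_eq_zero fun d hd => ?_
  obtain ⟨i0, hi0⟩ : ∃ i, d i = 0 := by
    by_contra hc
    push_neg at hc
    have h1 : n ≤ ∑ i, d i := by
      calc n = ∑ _i : Fin n, 1 := by simp
      _ ≤ ∑ i, d i := Finset.sum_le_sum fun i _ => Nat.one_le_iff_ne_zero.mpr (hc i)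
    have h2 : (∑ i, d i) ≤ P.totalDegree := by
      have h3 := MvPolynomial.le_totalDegree hd
      rwa [Finsupp.sum_fintype _ _ (fun _ => rfl)] at h3
    omega
  rw [← Finset.mul_sum]
  have h4 := Finset.prod_univ_sum (fun _ : Fin n => (Finset.univ : Finset Bool))
    (fun i b => ((if b then (-1 : ℚ) else 1) * (if b then (1 : ℚ) else 0) ^ d i))
  rw [Fintype.piFinset_univ] at h4
  have h0 : (∑ b : Bool, ((if b then (-1 : ℚ) else 1) * (if b then (1 : ℚ) else 0) ^ d i0))
      = 0 := by
    rw [Fintype.sum_bool, hi0]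
    norm_num
  rw [← h4, Finset.prod_eq_zero (Finset.mem_univ i0) h0, mul_zero]

/-- Brink's theorem for 0-1 points: if `∑ (p^{αⱼ}-1)·deg fⱼ < n`, a solution of
`fⱼ(a) ≡ 0 (mod p^{αⱼ})` with `a ∈ {0,1}ⁿ` is never unique. -/
theorem brink_zero_one (p : ℕ) (hp : p.Prime) (n r : ℕ)
    (f : Fin r → MvPolynomial (Fin n) ℤ) (α : Fin r → ℕ) (hα : ∀ j, 0 < α j)
    (hdeg : ∑ j, (p ^ α j - 1) * (f j).totalDegree < n)
    (a : Fin n → ℤ) (ha : ∀ i, a i = 0 ∨ a i = 1)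
    (hz : ∀ j, (p : ℤ) ^ α j ∣ MvPolynomial.eval a (f j)) :
    ∃ b : Fin n → ℤ, b ≠ a ∧ (∀ i, b i = 0 ∨ b i = 1) ∧
      ∀ j, (p : ℤ) ^ α j ∣ MvPolynomial.eval b (f j) := by
  by_contra hcon
  push_neg at hcon
  haveI : Fact p.Prime := ⟨hp⟩
  -- coefficient-sum bound for each fⱼ
  set S : Fin r → ℕ := fun j => ∑ d ∈ (f j).support, ((f j).coeff d).natAbs with hSdef
  set B : Fin r → ℤ := fun j => (p : ℤ) ^ α j * (S j + 1) with hBdef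
  have hp1 : ∀ j, (1 : ℤ) ≤ (p : ℤ) ^ α j := fun j =>
    one_le_pow₀ (by exact_mod_cast hp.one_lt.le)
  have habs : ∀ (j) (b : Fin n → ℤ), (∀ i, b i = 0 ∨ b i = 1) →
      |MvPolynomial.eval b (f j)| ≤ (S j : ℤ) := by
    intro j b hb
    rw [MvPolynomial.eval_eq']
    refine (Finset.abs_sum_le_sum_abs _ _).trans ?_
    rw [hSdef]
    push_cast
    refine Finset.sum_le_sum fun d _ => ?_
    rw [abs_mul, Int.abs_eq_natAbs]
    have h1 : |∏ i, b i ^ d i| ≤ 1 := by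
      rw [Finset.abs_prod]
      refine Finset.prod_le_one (fun i _ => abs_nonneg _) fun i _ => ?_
      rw [abs_pow]
      refine pow_le_one₀ (abs_nonneg _) ?_
      rcases hb i with h | h <;> simp [h]
    calc (((f j).coeff d).natAbs : ℤ) * |∏ i, b i ^ d i|
        ≤ (((f j).coeff d).natAbs : ℤ) * 1 :=
          mul_le_mul_of_nonneg_left h1 (by positivity)
    _ = (((f j).coeff d).natAbs : ℤ) := mul_one _
  -- lower bound for the shifted value
  have hNlb : ∀ (j) (b : Fin n → ℤ), (∀ i, b i = 0 ∨ b i = 1) →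
      (p : ℤ) ^ α j ≤ MvPolynomial.eval b (f j) + B j := by
    intro j b hb
    have h1 := habs j b hb
    have h2 := hp1 j
    have h3 : (0 : ℤ) ≤ (S j : ℤ) := Int.natCast_nonneg _
    have habs' : -(S j : ℤ) ≤ MvPolynomial.eval b (f j) := (abs_le.mp h1).1
    show (p : ℤ) ^ α j ≤ MvPolynomial.eval b (f j) + (p : ℤ) ^ α j * (S j + 1)
    nlinarith [mul_le_mul_of_nonneg_right h2 h3]
  -- the auxiliary integer polynomials
  set Q : Fin r → MvPolynomial (Fin n) ℤ := fun j =>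
    ∏ i ∈ Finset.range (p ^ α j - 1), (f j + MvPolynomial.C (B j - ((i : ℤ) + 1))) with hQdef
  have hQdeg : ∀ j, (Q j).totalDegree ≤ (p ^ α j - 1) * (f j).totalDegree := by
    intro j
    rw [hQdef]
    refine (MvPolynomial.totalDegree_finset_prod _ _).trans ?_
    calc (∑ i ∈ Finset.range (p ^ α j - 1),
          (f j + MvPolynomial.C (B j - ((i : ℤ) + 1))).totalDegree)
        ≤ ∑ _i ∈ Finset.range (p ^ α j - 1), (f j).totalDegree := by
          refine Finset.sum_le_sum fun i _ => ?_
          refine (MvPolynomial.totalDegree_add _ _).trans ?_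
          rw [MvPolynomial.totalDegree_C]
          exact max_le le_rfl (Nat.zero_le _)
    _ = (p ^ α j - 1) * (f j).totalDegree := by
          rw [Finset.sum_const, Finset.card_range, smul_eq_mul]
  -- the cube-value of Q j in terms of binomial coefficients
  have hQval : ∀ (j) (b : Fin n → ℤ), (∀ i, b i = 0 ∨ b i = 1) →
      MvPolynomial.eval b (Q j) = (Nat.factorial (p ^ α j - 1) : ℤ) *
        ((MvPolynomial.eval b (f j) + B j - 1).toNat.choose (p ^ α j - 1)) := by
    intro j b hb
    have hNb := hNlb j b hb
    have hcast : ((p ^ α j : ℕ) : ℤ) = (p : ℤ) ^ α j := by push_cast; ring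
    set N : ℤ := MvPolynomial.eval b (f j) + B j with hNdef
    set A : ℕ := (N - 1).toNat with hAdef
    have hAcast : (A : ℤ) = N - 1 := by
      rw [hAdef]
      have := hp1 j
      omega
    have hAge : p ^ α j - 1 ≤ A := by omega
    rw [hQdef]
    rw [map_prod]
    simp only [map_add, MvPolynomial.eval_C]
    have h6 : ∀ i ∈ Finset.range (p ^ α j - 1),
        MvPolynomial.eval b (f j) + (B j - ((i : ℤ) + 1)) = ((A - i : ℕ) : ℤ) := by
      intro i hi
      have hi' : i < p ^ α j - 1 := Finset.mem_range.mp hi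
      have hiA : i ≤ A := by omega
      have : ((A - i : ℕ) : ℤ) = (A : ℤ) - i := by
        push_cast [hiA]
        ring
      omega
    rw [Finset.prod_congr rfl h6, ← Nat.cast_prod,
      ← Nat.descFactorial_eq_prod_range A (p ^ α j - 1),
      Nat.descFactorial_eq_factorial_mul_choose]
    push_cast
    ring
  -- the value of the binomial coefficient mod p
  have hczmod : ∀ (j) (b : Fin n → ℤ), (∀ i, b i = 0 ∨ b i = 1) →
      (((MvPolynomial.eval b (f j) + B j - 1).toNat.choose (p ^ α j - 1) : ℕ) : ZMod p)
      = if (p : ℤ) ^ α j ∣ MvPolynomial.eval b (f j) then 1 else 0 := by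
    intro j b hb
    have hNb := hNlb j b hb
    have hpj := hp1 j
    set N : ℤ := MvPolynomial.eval b (f j) + B j with hNdef
    have h7 : (N - 1).toNat = N.toNat - 1 := by omega
    have h8 : 0 < N.toNat := by omega
    rw [h7, brink_choose_val p hp (α j) (hα j) N.toNat h8]
    have hBd : (p : ℤ) ^ α j ∣ B j := ⟨(S j + 1 : ℤ), rfl⟩
    have hiff : p ^ α j ∣ N.toNat ↔ (p : ℤ) ^ α j ∣ MvPolynomial.eval b (f j) := by
      have hNc : ((N.toNat : ℕ) : ℤ) = N := by omega
      rw [← Int.natCast_dvd_natCast, hNc]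
      push_cast
      constructor
      · intro h
        have := dvd_sub h hBd
        simpa [hNdef] using this
      · intro h
        exact dvd_add h hBd
    by_cases hd : (p : ℤ) ^ α j ∣ MvPolynomial.eval b (f j)
    · rw [if_pos (hiff.mpr hd), if_pos hd]
    · rw [if_neg (fun h => hd (hiff.mp h)), if_neg hd]
  -- cast-commuting lemma for evaluation
  have hcast : ∀ (Qp : MvPolynomial (Fin n) ℤ) (b : Fin n → ℤ),
      MvPolynomial.eval (fun i => ((b i : ℤ) : ℚ)) (MvPolynomial.map (Int.castRingHom ℚ) Qp)
      = ((MvPolynomial.eval b Qp : ℤ) : ℚ) := by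
    intro Qp b
    rw [MvPolynomial.eval_map]
    have h := MvPolynomial.eval₂_comp_left (Int.castRingHom ℚ) (RingHom.id ℤ) b Qp
    rw [MvPolynomial.eval₂_id, RingHom.comp_id] at h
    simpa [Function.comp_def] using h.symm
  -- cube points as integer vectors
  set pt : (Fin n → Bool) → (Fin n → ℤ) := fun x i => if x i then 1 else 0 with hptdef
  have hptcube : ∀ x : Fin n → Bool, ∀ i, pt x i = 0 ∨ pt x i = 1 := by
    intro x i
    rw [hptdef]
    by_cases h : x i <;> simp [h]
  -- the rational polynomial
  set Pq : MvPolynomial (Fin n) ℚ := ∏ j, (MvPolynomial.C (((Nat.factorial (p ^ α j - 1) : ℕ) : ℚ))⁻¹ *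
    MvPolynomial.map (Int.castRingHom ℚ) (Q j)) with hPqdef
  have hPdeg : Pq.totalDegree < n := by
    rw [hPqdef]
    calc (∏ j, (MvPolynomial.C (((Nat.factorial (p ^ α j - 1) : ℕ) : ℚ))⁻¹ *
          MvPolynomial.map (Int.castRingHom ℚ) (Q j))).totalDegree
        ≤ ∑ j, (MvPolynomial.C (((Nat.factorial (p ^ α j - 1) : ℕ) : ℚ))⁻¹ *
          MvPolynomial.map (Int.castRingHom ℚ) (Q j)).totalDegree :=
          MvPolynomial.totalDegree_finset_prod _ _
    _ ≤ ∑ j, (p ^ α j - 1) * (f j).totalDegree := by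
          refine Finset.sum_le_sum fun j _ => ?_
          refine (MvPolynomial.totalDegree_mul _ _).trans ?_
          rw [MvPolynomial.totalDegree_C, zero_add]
          refine le_trans ?_ (hQdeg j)
          exact Finset.sup_mono (MvPolynomial.support_map_subset _ _)
    _ < n := hdeg
  -- evaluation of Pq on the cube
  have heval : ∀ x : Fin n → Bool,
      MvPolynomial.eval (fun i => if x i then (1 : ℚ) else 0) Pq
      = ∏ j, (((MvPolynomial.eval (pt x) (f j) + B j - 1).toNat.choose (p ^ α j - 1) : ℕ) : ℚ) := by
    intro x
    have hg : (fun i => if x i then (1 : ℚ) else 0) = fun i => ((pt x i : ℤ) : ℚ) := by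
      funext i
      rw [hptdef]
      by_cases h : x i <;> simp [h]
    rw [hPqdef, hg, map_prod]
    refine Finset.prod_congr rfl fun j _ => ?_
    rw [map_mul, MvPolynomial.eval_C, hcast (Q j) (pt x), hQval j (pt x) (hptcube x)]
    push_cast
    rw [← mul_assoc, inv_mul_cancel₀ (by positivity), one_mul]
  -- alternating sum over the cube is zero
  have hsum0 := brink_alt_sum Pq hPdeg
  simp only [heval] at hsum0
  -- convert to an integer identity
  set c : Fin r → (Fin n → Bool) → ℕ := fun j x =>
    (MvPolynomial.eval (pt x) (f j) + B j - 1).toNat.choose (p ^ α j - 1) with hcdef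
  set T : ℤ := ∑ x : Fin n → Bool,
    (∏ i, if x i then (-1 : ℤ) else 1) * ∏ j, (c j x : ℤ) with hTdef
  have hT0 : T = 0 := by
    have hTc : (T : ℚ) = ∑ x : Fin n → Bool,
        (∏ i, if x i then (-1 : ℚ) else 1) * ∏ j, ((c j x : ℕ) : ℚ) := by
      rw [hTdef]
      push_cast [apply_ite (fun z : ℤ => (z : ℚ))]
      rfl
    rw [hcdef] at hTc
    rw [hsum0] at hTc
    exact_mod_cast hTc
  -- reduce mod p
  have hTz : (∑ x : Fin n → Bool,
      (∏ i, if x i then (-1 : ZMod p) else 1) * ∏ j, ((c j x : ℕ) : ZMod p)) = 0 := by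
    have : ((T : ℤ) : ZMod p) = 0 := by rw [hT0]; exact Int.cast_zero
    rw [hTdef] at this
    push_cast [apply_ite (fun z : ℤ => (z : ZMod p))] at this
    exact this
  -- the distinguished point corresponding to a
  set x₀ : Fin n → Bool := fun i => decide (a i = 1) with hx₀def
  have hptx₀ : pt x₀ = a := by
    funext i
    rw [hptdef, hx₀def]
    rcases ha i with h | h <;> simp [h]
  have hptinj : ∀ x : Fin n → Bool, pt x = a → x = x₀ := by
    intro x hx
    funext i
    have := congrFun hx i
    rw [hptdef] at this
    rw [hx₀def]
    by_cases h : x i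
    · simp only [h, if_true] at this
      simp [h, ← this]
    · simp only [h, if_false] at this
      simp only [h, decide_eq_false_iff_not]
      rw [← this]
      norm_num
  -- each term mod p
  have hterm : ∀ x : Fin n → Bool, x ≠ x₀ →
      (∏ i, if x i then (-1 : ZMod p) else 1) * ∏ j, ((c j x : ℕ) : ZMod p) = 0 := by
    intro x hx
    have hne : pt x ≠ a := fun h => hx (hptinj x h)
    obtain ⟨j0, hj0⟩ := hcon (pt x) hne (hptcube x)
    have : ((c j0 x : ℕ) : ZMod p) = 0 := by
      rw [hcdef]
      rw [hczmod j0 (pt x) (hptcube x)]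
      exact if_neg hj0
    rw [Finset.prod_eq_zero (Finset.mem_univ j0) this, mul_zero]
  have hterm₀ : (∏ i, if x₀ i then (-1 : ZMod p) else 1) * ∏ j, ((c j x₀ : ℕ) : ZMod p)
      = ∏ i, if x₀ i then (-1 : ZMod p) else 1 := by
    have : ∏ j, ((c j x₀ : ℕ) : ZMod p) = 1 := by
      refine Finset.prod_eq_one fun j _ => ?_
      rw [hcdef, hczmod j (pt x₀) (hptcube x₀)]
      rw [hptx₀]
      exact if_pos (hz j)
    rw [this, mul_one]
  have hfinal : (∏ i, if x₀ i then (-1 : ZMod p) else 1) = 0 := by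
    rw [← hterm₀, ← hTz]
    exact (Fintype.sum_eq_single x₀ hterm).symm
  have hsq : (∏ i, if x₀ i then (-1 : ZMod p) else 1) *
      (∏ i, if x₀ i then (-1 : ZMod p) else 1) = 1 := by
    rw [← Finset.prod_mul_distrib]
    refine Finset.prod_eq_one fun i _ => ?_
    by_cases h : x₀ i <;> simp [h]
  rw [hfinal, mul_zero] at hsq
  exact zero_ne_one hsq
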